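/- Let D = (V,E) be a digraph containing an in-arborescence T_in rooted at r spanning a set A ⊆ V and an out-arborescence T_out rooted at r spanning a set B ⊆ V, such that T_in and T_out are edge-disjoint. Then D admits an edge temporalisation under which every vertex of B is temporally reachable from every vertex of A; hence the temporal reachability of the resulting temporal graph is at least |A|·|B|. -/

import Mathlib

lemma aux_noCycle {V : Type*} (T : V → V → Prop) (r : V)
    (uniq : ∀ v x y, T v x → T v y → x = y)
    (rootNo : ∀ u, ¬ T r u) :
    ∀ a, Relation.ReflTransGen T a r → ¬ Relation.TransGen T a a := by
  intro a h
  induction h using Relation.ReflTransGen.head_induction_on with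
  | refl =>
    intro hT
    obtain ⟨x, hx, _⟩ := Relation.TransGen.head'_iff.1 hT
    exact rootNo x hx
  | head hac hcr ih =>
    rename_i s t
    intro hT
    obtain ⟨x, hx, hxa⟩ := Relation.TransGen.head'_iff.1 hT
    have hxc : x = t := uniq s x t hx hac
    subst hxc
    exact ih (Relation.TransGen.tail' hxa hac)

noncomputable def hRank {V : Type*} (T : V → V → Prop) (v : V) : ℕ :=
  {u | Relation.ReflTransGen T v u}.ncard

lemma hRank_lt {V : Type*} [Finite V] {T : V → V → Prop} {a b : V} (hT : T a b)
    (hnc : ¬ Relation.ReflTransGen T b a) : hRank T b < hRank T a := by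
  apply Set.ncard_lt_ncard _ (Set.toFinite _)
  have hsub : {u | Relation.ReflTransGen T b u} ⊆ {u | Relation.ReflTransGen T a u} :=
    fun u hu => Relation.ReflTransGen.head hT hu
  exact (Set.ssubset_iff_of_subset hsub).2 ⟨a, Relation.ReflTransGen.refl, hnc⟩

lemma hRank_le {V : Type*} [Fintype V] (T : V → V → Prop) (v : V) :
    hRank T v ≤ Nat.card V := by
  have := Set.ncard_le_ncard (Set.subset_univ {u | Relation.ReflTransGen T v u}) (Set.toFinite _)
  simpa [Set.ncard_univ, hRank] using this

lemma hRank_pos {V : Type*} [Fintype V] (T : V → V → Prop) (v : V) :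
    1 ≤ hRank T v :=
  (Set.ncard_pos (Set.toFinite _)).2 ⟨v, Relation.ReflTransGen.refl⟩

lemma chain_mono {V : Type*} (T : V → V → Prop) (g : V × V → ℕ)
    (hm : ∀ e f : V × V, T e.1 e.2 → T f.1 f.2 → e.2 = f.1 → g e < g f) :
    ∀ p : List (V × V), (∀ e ∈ p, T e.1 e.2) →
      p.Chain' (fun e f => e.2 = f.1) → p.Chain' (fun e f => g e < g f) := by
  intro p
  induction p with
  | nil => simp [List.Chain']
  | cons e t ih =>
    cases t with
    | nil => simp [List.Chain']
    | cons f t' =>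
      intro hmem hch
      rw [List.Chain', List.isChain_cons_cons] at hch ⊢
      exact ⟨hm e f (hmem e (by simp)) (hmem f (by simp)) hch.1,
        ih (fun x hx => hmem x (List.mem_cons_of_mem _ hx)) hch.2⟩

/-- Path to root along `T`. -/
lemma path_to_root {V : Type*} (T : V → V → Prop) (r a : V)
    (h : Relation.ReflTransGen T a r) :
    a = r ∨ ∃ p : List (V × V), (∀ e ∈ p, T e.1 e.2) ∧ (∃ e ∈ p.head?, e.1 = a) ∧
      (∃ e ∈ p.getLast?, e.2 = r) ∧ p.Chain' (fun e f => e.2 = f.1) := by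
  induction h using Relation.ReflTransGen.head_induction_on with
  | refl => exact Or.inl rfl
  | head hac hcr ih =>
    rename_i s t
    right
    rcases ih with rfl | ⟨p, hmem, ⟨e, he, he1⟩, hlast, hch⟩
    · exact ⟨[(s, t)], by simpa using hac, ⟨(s, t), by simp⟩, ⟨(s, t), by simp⟩, by simp [List.Chain']⟩
    · refine ⟨(s, t) :: p, ?_, ⟨(s, t), by simp⟩, ?_, ?_⟩
      · intro x hx
        rcases List.mem_cons.1 hx with rfl | hx
        · exact hac
        · exact hmem x hx
      · obtain ⟨f, hf, hf2⟩ := hlast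
        exact ⟨f, List.mem_getLast?_append_of_mem_getLast? (l₁ := [(s, t)]) hf, hf2⟩
      · rw [List.Chain', List.isChain_cons]
        refine ⟨?_, hch⟩
        intro y hy
        have hye : y = e := by
          rw [Option.mem_def] at hy he; rw [hy] at he; exact (Option.some_inj.1 he)
        rw [hye, he1]

/-- Path from root along `T`. -/
lemma path_from_root {V : Type*} (T : V → V → Prop) (r b : V)
    (h : Relation.ReflTransGen T r b) :
    b = r ∨ ∃ p : List (V × V), (∀ e ∈ p, T e.1 e.2) ∧ (∃ e ∈ p.head?, e.1 = r) ∧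
      (∃ e ∈ p.getLast?, e.2 = b) ∧ p.Chain' (fun e f => e.2 = f.1) := by
  induction h with
  | refl => exact Or.inl rfl
  | tail hrc hcb ih =>
    rename_i c b
    right
    rcases ih with rfl | ⟨p, hmem, hhead, ⟨e, he, he2⟩, hch⟩
    · exact ⟨[(c, b)], by simpa using hcb, ⟨(c, b), by simp⟩, ⟨(c, b), by simp⟩, by simp [List.Chain']⟩
    · refine ⟨p ++ [(c, b)], ?_, ?_, ?_, ?_⟩
      · intro x hx
        rcases List.mem_append.1 hx with hx | hx
        · exact hmem x hx
        · simp at hx; subst hx; exact hcb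
      · obtain ⟨f, hf, hf1⟩ := hhead
        exact ⟨f, List.mem_head?_append_of_mem_head? hf, hf1⟩
      · refine ⟨(c, b), ?_, rfl⟩
        rw [List.getLast?_append_of_ne_nil _ (by simp)]; simp
      · refine List.IsChain.append hch (by simp) ?_
        intro x hx y hy
        have hxe : x = e := by
          rw [Option.mem_def] at hx he; rw [hx] at he; exact (Option.some_inj.1 he)
        have hy' : y = (c, b) := by
          rw [Option.mem_def] at hy; simpa using hy.symm
        rw [hxe, hy', he2]
/-- A temporal path in a digraph with edge relation `E` and temporalisation `τ`:
a nonempty list of edges of `E`, consecutive (head = next tail), from `u` to `v`,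
with strictly increasing times. -/
def IsTemporalPath {V : Type*} (E : V → V → Prop) (τ : V × V → ℕ)
    (u v : V) (p : List (V × V)) : Prop :=
  (∀ e ∈ p, E e.1 e.2) ∧
  (∃ e ∈ p.head?, e.1 = u) ∧
  (∃ e ∈ p.getLast?, e.2 = v) ∧
  p.Chain' (fun e f => e.2 = f.1) ∧
  p.Chain' (fun e f => τ e < τ f)

/-- `v` is temporally reachable from `u`. -/
def TReach {V : Type*} (E : V → V → Prop) (τ : V × V → ℕ) (u v : V) : Prop :=
  u = v ∨ ∃ p, IsTemporalPath E τ u v p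

/-- `T` is (the edge relation of) an out-arborescence of the digraph `E`,
rooted at `r`, spanning the vertex set `B`. -/
structure IsOutArb {V : Type*} (E : V → V → Prop) (T : V → V → Prop)
    (r : V) (B : Set V) : Prop where
  sub : ∀ ⦃a b⦄, T a b → E a b
  mem : ∀ ⦃a b⦄, T a b → a ∈ B ∧ b ∈ B
  root : r ∈ B
  reach : ∀ v ∈ B, Relation.ReflTransGen T r v
  parent : ∀ v ∈ B, v ≠ r → ∃! u, T u v
  rootNoParent : ∀ u, ¬ T u r

/-- `T` is (the edge relation of) an in-arborescence of the digraph `E`,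
rooted at `r`, spanning the vertex set `B`. -/
structure IsInArb {V : Type*} (E : V → V → Prop) (T : V → V → Prop)
    (r : V) (B : Set V) : Prop where
  sub : ∀ ⦃a b⦄, T a b → E a b
  mem : ∀ ⦃a b⦄, T a b → a ∈ B ∧ b ∈ B
  root : r ∈ B
  reach : ∀ v ∈ B, Relation.ReflTransGen T v r
  child : ∀ v ∈ B, v ≠ r → ∃! u, T v u
  rootNoChild : ∀ u, ¬ T r u


theorem stmt7 {V : Type*} [Fintype V] (E Tin Tout : V → V → Prop)
    (r : V) (A B : Set V)
    (hin : IsInArb E Tin r A) (hout : IsOutArb E Tout r B)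
    (hdisj : ∀ a b, Tin a b → Tout a b → False) :
    ∃ τ : V × V → ℕ, (∀ a ∈ A, ∀ b ∈ B, TReach E τ a b) ∧
      A.ncard * B.ncard ≤ {p : V × V | TReach E τ p.1 p.2}.ncard := by
  classical
  set N : ℕ := Nat.card V + 1 with hN
  -- uniqueness of successors/predecessors
  have uniqIn : ∀ v x y, Tin v x → Tin v y → x = y := by
    intro v x y hx hy
    have hvr : v ≠ r := fun h => hin.rootNoChild x (h ▸ hx)
    obtain ⟨u, _, hun⟩ := hin.child v (hin.mem hx).1 hvr
    rw [hun x hx, hun y hy]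
  have uniqOut : ∀ v x y, Tout x v → Tout y v → x = y := by
    intro v x y hx hy
    have hvr : v ≠ r := fun h => hout.rootNoParent x (h ▸ hx)
    obtain ⟨u, _, hun⟩ := hout.parent v (hout.mem hx).2 hvr
    rw [hun x hx, hun y hy]
  have noCycIn : ∀ a b, Tin a b → ¬ Relation.ReflTransGen Tin b a := by
    intro a b hab hba
    exact aux_noCycle Tin r uniqIn hin.rootNoChild a (hin.reach a (hin.mem hab).1)
      (Relation.TransGen.head' hab hba)
  have noCycOut : ∀ a b, Tout a b → ¬ Relation.ReflTransGen Tout b a := by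
    intro a b hab hba
    have huniq : ∀ v x y, Function.swap Tout v x → Function.swap Tout v y → x = y :=
      fun v x y hx hy => uniqOut v x y hx hy
    have hreach : Relation.ReflTransGen (Function.swap Tout) b r :=
      (hout.reach b (hout.mem hab).2).swap
    exact aux_noCycle (Function.swap Tout) r huniq hout.rootNoParent b hreach
      (Relation.TransGen.head' (show Function.swap Tout b a from hab) hba.swap)
  have hInlt : ∀ a b, Tin a b → hRank Tin b < hRank Tin a :=
    fun a b h => hRank_lt h (noCycIn a b h)
  have hOutlt : ∀ a b, Tout a b → hRank (Function.swap Tout) a < hRank (Function.swap Tout) b := by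
    intro a b h
    exact hRank_lt (show Function.swap Tout b a from h)
      (fun hc => noCycOut a b h (Relation.reflTransGen_swap.1 hc))
  -- the temporalisation
  set τ : V × V → ℕ := fun e => if Tin e.1 e.2 then N - hRank Tin e.1
      else if Tout e.1 e.2 then N + hRank (Function.swap Tout) e.2 else 0 with hτ
  have τin : ∀ e : V × V, Tin e.1 e.2 → τ e = N - hRank Tin e.1 := by
    intro e he; simp only [hτ, if_pos he]
  have τout : ∀ e : V × V, Tout e.1 e.2 → τ e = N + hRank (Function.swap Tout) e.2 := by
    intro e he
    have : ¬ Tin e.1 e.2 := fun h => hdisj e.1 e.2 h he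
    simp only [hτ, if_neg this, if_pos he]
  have monoIn : ∀ e f : V × V, Tin e.1 e.2 → Tin f.1 f.2 → e.2 = f.1 → τ e < τ f := by
    intro e f he hf hef
    rw [τin e he, τin f hf]
    have h1 : hRank Tin e.2 < hRank Tin e.1 := hInlt _ _ he
    have h2 : hRank Tin e.1 ≤ Nat.card V := hRank_le Tin e.1
    rw [← hef]
    omega
  have monoOut : ∀ e f : V × V, Tout e.1 e.2 → Tout f.1 f.2 → e.2 = f.1 → τ e < τ f := by
    intro e f he hf hef
    rw [τout e he, τout f hf]
    have h1 : hRank (Function.swap Tout) f.1 < hRank (Function.swap Tout) f.2 := hOutlt _ _ hf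
    rw [hef]
    omega
  have hmain : ∀ a ∈ A, ∀ b ∈ B, TReach E τ a b := by
    intro a ha b hb
    rcases path_to_root Tin r a (hin.reach a ha) with rfl | ⟨pin, hinmem, hinh, hinl, hinch⟩
    · -- a = r
      rcases path_from_root Tout a b (hout.reach b hb) with rfl | ⟨p, hm, hh, hl, hch⟩
      · exact Or.inl rfl
      · refine Or.inr ⟨p, fun e he => hout.sub (hm e he), hh, hl, hch,
          chain_mono Tout τ monoOut p hm hch⟩
    · rcases path_from_root Tout r b (hout.reach b hb) with rfl | ⟨pout, houtmem, houth, houtl, houtch⟩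
      · -- b = r : just the in-path
        refine Or.inr ⟨pin, fun e he => hin.sub (hinmem e he), hinh, hinl, hinch,
          chain_mono Tin τ monoIn pin hinmem hinch⟩
      · refine Or.inr ⟨pin ++ pout, ?_, ?_, ?_, ?_, ?_⟩
        · intro e he
          rcases List.mem_append.1 he with he | he
          · exact hin.sub (hinmem e he)
          · exact hout.sub (houtmem e he)
        · obtain ⟨e, he, he1⟩ := hinh
          exact ⟨e, List.mem_head?_append_of_mem_head? he, he1⟩
        · obtain ⟨e, he, he2⟩ := houtl
          exact ⟨e, List.mem_getLast?_append_of_mem_getLast? he, he2⟩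
        · refine List.IsChain.append hinch houtch ?_
          intro x hx y hy
          obtain ⟨e, he, he2⟩ := hinl
          obtain ⟨f, hf, hf1⟩ := houth
          have hxe : x = e := by
            rw [Option.mem_def] at hx he; rw [hx] at he; exact Option.some_inj.1 he
          have hyf : y = f := by
            rw [Option.mem_def] at hy hf; rw [hy] at hf; exact Option.some_inj.1 hf
          rw [hxe, hyf, he2, hf1]
        · refine List.IsChain.append (chain_mono Tin τ monoIn pin hinmem hinch)
            (chain_mono Tout τ monoOut pout houtmem houtch) ?_
          intro x hx y hy
          have hxT : Tin x.1 x.2 := hinmem x (List.mem_of_mem_getLast? hx)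
          have hyT : Tout y.1 y.2 := houtmem y (List.mem_of_mem_head? hy)
          rw [τin x hxT, τout y hyT]
          have := hRank_pos (Function.swap Tout) y.2
          omega
  refine ⟨τ, hmain, ?_⟩
  have hsub : A ×ˢ B ⊆ {p : V × V | TReach E τ p.1 p.2} :=
    fun p hp => hmain p.1 hp.1 p.2 hp.2
  have h1 : (A ×ˢ B).ncard = A.ncard * B.ncard := by
    rw [Set.ncard_eq_toFinset_card', Set.toFinset_prod, Finset.card_product,
      Set.ncard_eq_toFinset_card', Set.ncard_eq_toFinset_card']
  rw [← h1]
  exact Set.ncard_le_ncard hsub (Set.toFinite _)
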